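/- Let G_ω be a weighted graph and let S be a multiset of pebbling moves on G_ω. Then there exists a sub-multiset R ⊆ S that is acyclic and satisfies p_R(v) ≥ p_S(v) for every pebble function p on G and every vertex v ∈ V(G). -/

import Mathlib

open Finset

variable {V : Type*}

/-- Applying the pebbling move `m = (v, u)` on `G_ω`: remove `ω v u` pebbles at `v`
and add one pebble at `u`. -/
def moveFn [DecidableEq V] (ω : V → V → ℕ) (m : V × V) (p : V → ℤ) : V → ℤ :=
  fun w => if w = m.1 then p m.1 - ω m.1 m.2 else if w = m.2 then p m.2 + 1 else p w

/-- The pebble function obtained after applying a sequence of pebbling moves. -/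
def applyList [DecidableEq V] (ω : V → V → ℕ) : List (V × V) → (V → ℤ) → (V → ℤ)
  | [], p => p
  | m :: l, p => applyList ω l (moveFn ω m p)

/-- A pebbling sequence is executable from `p` if every move is along an edge of `G`
and every intermediate pebble function is nonnegative. -/
def Executable [DecidableEq V] (G : SimpleGraph V) (ω : V → V → ℕ) :
    (V → ℤ) → List (V × V) → Prop
  | _, [] => True
  | p, m :: l => G.Adj m.1 m.2 ∧ (∀ w, 0 ≤ moveFn ω m p w) ∧ Executable G ω (moveFn ω m p) l

/-- `x` is `t`-reachable from `p` on the weighted graph `G_ω`. -/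
def Reaches [DecidableEq V] (G : SimpleGraph V) (ω : V → V → ℕ) (p : V → ℤ) (x : V)
    (t : ℕ) : Prop :=
  ∃ l : List (V × V), Executable G ω p l ∧ (t : ℤ) ≤ applyList ω l p x

/-- A pebble distribution is a nonnegative pebble function. -/
def IsDistrib (p : V → ℤ) : Prop := ∀ v, 0 ≤ p v

/-- The size of a pebble distribution: the total number of pebbles. -/
def size [Fintype V] (p : V → ℤ) : ℤ := ∑ v, p v

/-- The `t`-pebbling number `π_t(G_ω, x)`: the least `m` such that `x` is `t`-reachable
from every pebble distribution of size `m`. -/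
noncomputable def piT [Fintype V] [DecidableEq V] (G : SimpleGraph V) (ω : V → V → ℕ)
    (x : V) (t : ℕ) : ℕ :=
  sInf {m : ℕ | ∀ p : V → ℤ, IsDistrib p → size p = (m : ℤ) → Reaches G ω p x t}

/-- `p_S` for a multiset `S` of pebbling moves:
`p_S(w) = p(w) + d⁻(w) − ∑ ω(w,u)` over arcs leaving `w`. -/
def applyMS [DecidableEq V] (ω : V → V → ℕ) (S : Multiset (V × V)) (p : V → ℤ) : V → ℤ :=
  fun w => p w + (Multiset.card (S.filter (fun m => m.2 = w)) : ℤ)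
    - ((S.filter (fun m => m.1 = w)).map (fun m => (ω m.1 m.2 : ℤ))).sum

/-- The transition digraph of `S` contains a directed cycle. -/
def HasCycle (S : Multiset (V × V)) : Prop :=
  ∃ l : List (V × V), l ≠ [] ∧ (l : Multiset (V × V)) ≤ S ∧
    List.Chain' (fun a b => a.2 = b.1) l ∧
    l.getLast?.map Prod.snd = l.head?.map Prod.fst

/-- A multiset of pebbling moves is acyclic if its transition digraph has no directed cycle. -/
def Acyclic (S : Multiset (V × V)) : Prop := ¬HasCycle S

/-- A list of pebbling moves is regular if each move is an initial move of the multiset of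
remaining moves: the source of each move has in-degree zero among the remaining moves. -/
def RegularSeq : List (V × V) → Prop
  | [] => True
  | m :: l => (∀ m' ∈ m :: l, m'.2 ≠ m.1) ∧ RegularSeq l


lemma chain_count [DecidableEq V] (l : List (V × V)) (hne : l ≠ [])
    (hchain : List.Chain' (fun a b : V × V => a.2 = b.1) l) (w : V) :
    (l.map Prod.snd).count w + (if (l.head hne).1 = w then 1 else 0)
      = (l.map Prod.fst).count w + (if (l.getLast hne).2 = w then 1 else 0) := by
  induction l with
  | nil => exact absurd rfl hne
  | cons m rest ih =>
    cases rest with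
    | nil =>
      simp only [List.map_cons, List.map_nil, List.head_cons, List.getLast_singleton,
        List.count_cons, List.count_nil]
      split_ifs <;> simp_all <;> omega
    | cons m' rest' =>
      obtain ⟨h1, h2⟩ := List.isChain_cons_cons.mp hchain
      have key := ih (List.cons_ne_nil _ _) h2 
      have hlast : (m :: m' :: rest').getLast (List.cons_ne_nil _ _)
          = (m' :: rest').getLast (List.cons_ne_nil _ _) :=
        List.getLast_cons (List.cons_ne_nil _ _)
      simp only [List.map_cons, List.head_cons, hlast, List.count_cons] at key ⊢
      rw [h1]
      simp only [beq_iff_eq] at key ⊢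
      grind

lemma cycle_countP [DecidableEq V] (l : List (V × V)) (hne : l ≠ [])
    (hchain : List.Chain' (fun a b : V × V => a.2 = b.1) l)
    (hclosed : l.getLast?.map Prod.snd = l.head?.map Prod.fst) (w : V) :
    Multiset.countP (fun m => m.2 = w) (l : Multiset (V × V))
      = Multiset.countP (fun m => m.1 = w) (l : Multiset (V × V)) := by
  have hends : (l.getLast hne).2 = (l.head hne).1 := by
    rw [List.getLast?_eq_some_getLast hne, List.head?_eq_head hne] at hclosed
    simpa using hclosed
  have hc := chain_count l hne hchain w
  rw [hends] at hc
  have hcount : (l.map Prod.snd).count w = (l.map Prod.fst).count w := by omega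
  have e1 : Multiset.countP (fun m => m.2 = w) (l : Multiset (V × V))
      = Multiset.count w (Multiset.map Prod.snd (l : Multiset (V × V))) := by
    rw [Multiset.count, Multiset.countP_map, Multiset.countP_eq_card_filter]
    congr 1
    apply Multiset.filter_congr
    intro m _; simp [eq_comm]
  have e2 : Multiset.countP (fun m => m.1 = w) (l : Multiset (V × V))
      = Multiset.count w (Multiset.map Prod.fst (l : Multiset (V × V))) := by
    rw [Multiset.count, Multiset.countP_map, Multiset.countP_eq_card_filter]
    congr 1
    apply Multiset.filter_congr
    intro m _; simp [eq_comm]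
  rw [e1, e2]
  simpa using hcount


lemma applyMS_remove [DecidableEq V] (ω : V → V → ℕ) (S B : Multiset (V × V)) (hB : B ≤ S)
    (h : ∀ w, (Multiset.card (B.filter (fun m => m.2 = w)) : ℤ)
      ≤ ((B.filter (fun m => m.1 = w)).map (fun m => (ω m.1 m.2 : ℤ))).sum)
    (p : V → ℤ) (v : V) : applyMS ω S p v ≤ applyMS ω (S - B) p v := by
  have hSB : S - B + B = S := tsub_add_cancel_of_le hB
  have expand : applyMS ω S p v = applyMS ω (S - B) p v
      + (Multiset.card (B.filter (fun m => m.2 = v)) : ℤ)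
      - ((B.filter (fun m => m.1 = v)).map (fun m => (ω m.1 m.2 : ℤ))).sum := by
    unfold applyMS
    conv_lhs => rw [← hSB]
    rw [Multiset.filter_add, Multiset.filter_add, Multiset.map_add, Multiset.sum_add,
      Multiset.card_add]
    push_cast
    ring
  linarith [h v]

/-- For any multiset `S` of pebbling moves on a weighted graph `G_ω`
there is an acyclic sub-multiset `R ⊆ S` with `p_R(v) ≥ p_S(v)` for every pebble
function `p` and every vertex `v`. -/
theorem statement0 {V : Type*} [Fintype V] [DecidableEq V]
    (G : SimpleGraph V) (hG : G.Connected)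
    (ω : V → V → ℕ) (hsym : ∀ u v : V, ω u v = ω v u)
    (hω : ∀ u v : V, G.Adj u v → 2 ≤ ω u v)
    (S : Multiset (V × V)) (hS : ∀ m ∈ S, G.Adj m.1 m.2) :
    ∃ R : Multiset (V × V), R ≤ S ∧ Acyclic R ∧
      ∀ (p : V → ℤ) (v : V), applyMS ω S p v ≤ applyMS ω R p v := by
  classical
  revert hS
  induction S using Multiset.strongInductionOn with
  | ih S ih =>
    intro hS
    by_cases hA : Acyclic S
    · exact ⟨S, le_rfl, hA, fun p v => le_rfl⟩
    · rw [Acyclic, not_not] at hA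
      obtain ⟨l, hne, hle, hchain, hclosed⟩ := hA
      have hlt : S - (l : Multiset (V × V)) < S := by
        refine lt_of_le_of_ne tsub_le_self (fun h => ?_)
        have hc := congrArg Multiset.card h
        rw [Multiset.card_sub hle] at hc
        have hcl : 0 < Multiset.card (l : Multiset (V × V)) := by
          rw [Multiset.coe_card]
          exact List.length_pos_iff.mpr hne
        have hcle := Multiset.card_le_card hle
        omega
      obtain ⟨R, hR1, hR2, hR3⟩ := ih (S - (l : Multiset (V × V))) hlt
        (fun m hm => hS m (Multiset.mem_of_le tsub_le_self hm))
      refine ⟨R, hR1.trans tsub_le_self, hR2, fun p v => ?_⟩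
      refine le_trans ?_ (hR3 p v)
      apply applyMS_remove ω S (l : Multiset (V × V)) hle ?_ p v
      intro w
      have hcnt := cycle_countP l hne hchain hclosed w
      rw [Multiset.countP_eq_card_filter, Multiset.countP_eq_card_filter] at hcnt
      rw [hcnt]
      have hone : ∀ x ∈ ((l : Multiset (V × V)).filter (fun m => m.1 = w)).map
          (fun m => (ω m.1 m.2 : ℤ)), (1 : ℤ) ≤ x := by
        intro x hx
        obtain ⟨m, hm, rfl⟩ := Multiset.mem_map.mp hx
        have hmS : m ∈ S := Multiset.mem_of_le hle (Multiset.mem_of_mem_filter hm)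
        have := hω m.1 m.2 (hS m hmS)
        omega
      calc (Multiset.card ((l : Multiset (V × V)).filter (fun m => m.1 = w)) : ℤ)
          = Multiset.card (((l : Multiset (V × V)).filter (fun m => m.1 = w)).map
              (fun m => (ω m.1 m.2 : ℤ))) • (1 : ℤ) := by
            rw [Multiset.card_map]; simp
        _ ≤ _ := Multiset.card_nsmul_le_sum hone
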